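/- For every real ε with 0 < ε < 1 there exists w₀ such that for every integer w ≥ w₀, every real R ≥ w³, every torus side length n ≥ 10R, every node x, and every configuration σ on the torus in which σ(y) = +1 for every node y at toroidal Euclidean distance at most R from x, the following holds: no node y at toroidal Euclidean distance at most R from x is unhappy in σ. Consequently, negating the spin of any single unhappy node of σ yields a configuration in which all nodes at Euclidean distance at most R from x still have spin +1. -/

import Mathlib

open scoped Classical

/-! The Schelling model on the n×n torus (ℤ/nℤ)² with window parameter w and
tolerance τ = (1−ε)/2; configurations assign each node a spin in {+1,−1} ⊆ ℤ. -/

/-- Toroidal distance between two elements of ℤ/nℤ. -/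
def tdist (n : ℕ) (a b : ZMod n) : ℕ := min (a - b).val (b - a).val

/-- Toroidal ℓ∞ distance between two nodes of the n×n torus. -/
def torusDist (n : ℕ) (x y : ZMod n × ZMod n) : ℕ :=
  max (tdist n x.1 y.1) (tdist n x.2 y.2)

/-- Toroidal Euclidean distance between two nodes of the n×n torus. -/
noncomputable def torusEDist (n : ℕ) (x y : ZMod n × ZMod n) : ℝ :=
  Real.sqrt ((tdist n x.1 y.1 : ℝ)^2 + (tdist n x.2 y.2 : ℝ)^2)

/-- `N_w(x)`: the set of nodes at toroidal ℓ∞ distance at most `w` from `x`. -/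
noncomputable def nbhd (n : ℕ) [NeZero n] (w : ℕ) (x : ZMod n × ZMod n) :
    Finset (ZMod n × ZMod n) :=
  Finset.univ.filter (fun y => torusDist n x y ≤ w)

/-- The bias of node `x` in configuration `σ`: the sum of the spins over `N_w(x)`. -/
noncomputable def bias (n : ℕ) [NeZero n] (w : ℕ) (σ : ZMod n × ZMod n → ℤ)
    (x : ZMod n × ZMod n) : ℤ :=
  ∑ y ∈ nbhd n w x, σ y

/-- Node `x` is unhappy in `σ` (with tolerance τ = (1−ε)/2) iff
    σ(x)·b_σ(x) < −ε(2w+1)². -/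
def Unhappy (n : ℕ) [NeZero n] (w : ℕ) (ε : ℝ) (σ : ZMod n × ZMod n → ℤ)
    (x : ZMod n × ZMod n) : Prop :=
  ((σ x * bias n w σ x : ℤ) : ℝ) < -ε * (2*(w : ℝ) + 1)^2

-- lemmas
lemma natAbs_cast_abs (m : ℤ) : ((m.natAbs : ℕ) : ℝ) = |(m:ℝ)| := by
  rw [Nat.cast_natAbs]; push_cast; ring

noncomputable def zlift (n : ℕ) [NeZero n] (c : ZMod n) : ℤ :=
  if c.val ≤ (-c).val then (c.val : ℤ) else -(((-c).val : ℤ))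

lemma zlift_cast {n : ℕ} [NeZero n] (c : ZMod n) : ((zlift n c : ℤ) : ZMod n) = c := by
  unfold zlift; split
  · rw [Int.cast_natCast]; exact ZMod.natCast_rightInverse c
  · rw [Int.cast_neg, Int.cast_natCast, ZMod.natCast_rightInverse (-c), neg_neg]

lemma zlift_natAbs {n : ℕ} [NeZero n] (c : ZMod n) :
    (zlift n c).natAbs = min c.val (-c).val := by
  unfold zlift; split
  · rename_i h; rw [Int.natAbs_natCast, min_eq_left h]
  · rename_i h; push_neg at h
    rw [Int.natAbs_neg, Int.natAbs_natCast, min_eq_right h.le]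

lemma tdist_comm (n : ℕ) (a b : ZMod n) : tdist n a b = tdist n b a := min_comm _ _

lemma zlift_natAbs_tdist {n : ℕ} [NeZero n] (b c : ZMod n) :
    (zlift n (c - b)).natAbs = tdist n b c := by
  rw [zlift_natAbs, tdist, neg_sub, min_comm]

lemma tdist_eq_natAbs {n : ℕ} [NeZero n] (m : ℤ) (b c : ZMod n)
    (hm : (m : ZMod n) = c - b) (h2 : 2 * m.natAbs ≤ n) :
    tdist n b c = m.natAbs := by
  have hn : 0 < n := Nat.pos_of_ne_zero (NeZero.ne n)
  rcases Nat.eq_zero_or_pos m.natAbs with hkn | hkpos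
  · have h0 : m = 0 := Int.natAbs_eq_zero.mp hkn
    subst h0
    simp only [Int.cast_zero] at hm
    have : c = b := by linear_combination -hm
    simp [tdist, this, hkn]
  have hkn : m.natAbs < n := by omega
  set k := m.natAbs with hk
  have hcb : c - b = (k : ZMod n) ∨ c - b = -(k : ZMod n) := by
    rcases Int.natAbs_eq m with h | h
    · left; rw [← hm, h, Int.cast_natCast]
    · right; rw [← hm, h, Int.cast_neg, Int.cast_natCast]
  have hvk : ((k : ZMod n)).val = k := by rw [ZMod.val_natCast, Nat.mod_eq_of_lt hkn]
  have hk0 : 0 < k := hkpos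
  have hkez : (k : ZMod n) ≠ 0 := by
    intro h
    rw [h, ZMod.val_zero] at hvk
    omega
  have hnegv : (-(k : ZMod n)).val = n - k := by
    rw [ZMod.neg_val]
    simp [hkez, hvk]
  rcases hcb with h | h
  · rw [tdist]
    have hbc : b - c = -(k : ZMod n) := by linear_combination -h
    rw [h, hbc, hnegv, hvk]
    omega
  · rw [tdist]
    have hbc : b - c = (k : ZMod n) := by linear_combination -h
    rw [h, hbc, hnegv, hvk]
    omega

lemma fiber_le (w : ℕ) (a c : ℤ) (ha : ((w:ℤ))^2 ≤ |a|) (hw : 1 ≤ w) :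
    ((Finset.Icc (-(w:ℤ)) w).filter (fun i => |i*a + c| < (w:ℤ)^2)).card ≤ 2 := by
  have hw2 : (0:ℝ) < (w:ℝ)^2 := by positivity
  have ha0 : a ≠ 0 := by
    intro h; rw [h] at ha; simp at ha
    have : ((w:ℤ))^2 > 0 := by positivity
    omega
  set q : ℝ := if 0 < a then (-(w:ℝ)^2 - c)/a else ((w:ℝ)^2 - c)/a with hq
  have key : ∀ i : ℤ, i ∈ (Finset.Icc (-(w:ℤ)) w).filter (fun i => |i*a + c| < (w:ℤ)^2) →
      i ∈ Finset.Icc (⌊q⌋ + 1) (⌊q⌋ + 2) := by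
    intro i hi
    rw [Finset.mem_filter] at hi
    obtain ⟨-, habs⟩ := hi
    rw [abs_lt] at habs
    obtain ⟨h1, h2⟩ := habs
    have h1R : -(w:ℝ)^2 < (i:ℝ)*(a:ℝ) + (c:ℝ) := by exact_mod_cast h1
    have h2R : (i:ℝ)*(a:ℝ) + (c:ℝ) < (w:ℝ)^2 := by exact_mod_cast h2
    have hqi : q < (i:ℝ) ∧ (i:ℝ) < q + 2 := by
      rcases lt_or_gt_of_ne ha0 with hneg | hpos
      · have hnaR : (0:ℝ) < -(a:ℝ) := by exact_mod_cast neg_pos.mpr hneg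
        have haR : ((w:ℝ))^2 ≤ -(a:ℝ) := by exact_mod_cast (abs_of_neg hneg ▸ ha)
        have hq' : q = ((w:ℝ)^2 - c)/a := by rw [hq, if_neg (by exact not_lt.mpr hneg.le)]
        have hgap : (-(w:ℝ)^2 - c)/a = ((w:ℝ)^2 - c)/a + 2*(w:ℝ)^2/(-(a:ℝ)) := by
          field_simp; ring
        have h2div : 2*(w:ℝ)^2/(-(a:ℝ)) ≤ 2 := by
          rw [div_le_iff₀ hnaR]; nlinarith [haR]
        constructor
        · rw [hq', div_lt_iff_of_neg (by linarith : (a:ℝ) < 0)]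
          nlinarith [h2R]
        · have h2' : (i:ℝ) < (-(w:ℝ)^2 - c)/a := by
            rw [lt_div_iff_of_neg (by linarith : (a:ℝ) < 0)]
            nlinarith [h1R]
          rw [hq']
          calc (i:ℝ) < (-(w:ℝ)^2 - c)/a := h2'
            _ = ((w:ℝ)^2 - c)/a + 2*(w:ℝ)^2/(-(a:ℝ)) := hgap
            _ ≤ ((w:ℝ)^2 - c)/a + 2 := by linarith
      · have hpa : (0:ℝ) < (a:ℝ) := by exact_mod_cast hpos
        have haR : ((w:ℝ))^2 ≤ (a:ℝ) := by exact_mod_cast (abs_of_pos hpos ▸ ha)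
        have hq' : q = (-(w:ℝ)^2 - c)/a := by rw [hq, if_pos hpos]
        have hgap : ((w:ℝ)^2 - c)/a = (-(w:ℝ)^2 - c)/a + 2*(w:ℝ)^2/(a:ℝ) := by
          field_simp; ring
        have h2div : 2*(w:ℝ)^2/(a:ℝ) ≤ 2 := by
          rw [div_le_iff₀ hpa]; nlinarith [haR]
        constructor
        · rw [hq', div_lt_iff₀ hpa]
          nlinarith [h1R]
        · have h2' : (i:ℝ) < ((w:ℝ)^2 - c)/a := by
            rw [lt_div_iff₀ hpa]
            nlinarith [h2R]
          rw [hq']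
          calc (i:ℝ) < ((w:ℝ)^2 - c)/a := h2'
            _ = (-(w:ℝ)^2 - c)/a + 2*(w:ℝ)^2/(a:ℝ) := hgap
            _ ≤ (-(w:ℝ)^2 - c)/a + 2 := by linarith
    obtain ⟨hl, hr⟩ := hqi
    rw [Finset.mem_Icc]
    constructor
    · have : ⌊q⌋ < i := Int.floor_lt.mpr hl
      omega
    · have : i - 2 ≤ ⌊q⌋ := Int.le_floor.mpr (by push_cast; linarith)
      omega
  calc ((Finset.Icc (-(w:ℤ)) w).filter _).card
      ≤ (Finset.Icc (⌊q⌋ + 1) (⌊q⌋ + 2)).card := Finset.card_le_card key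
    _ = 2 := by rw [Int.card_Icc]; ring_nf; rfl

lemma count_lb (w : ℕ) (hw : 1 ≤ w) (a₁ a₂ : ℤ) (hA : ((w:ℤ))^2 ≤ max |a₁| |a₂|) :
    (2*w+1)^2 ≤ 2 * ((Finset.Icc (-(w:ℤ)) w ×ˢ Finset.Icc (-(w:ℤ)) w).filter
      (fun u => (w:ℤ)^2 ≤ u.1*a₁ + u.2*a₂)).card + (4*w + 2) := by
  classical
  set Q := Finset.Icc (-(w:ℤ)) w ×ˢ Finset.Icc (-(w:ℤ)) w with hQ
  set G := Q.filter (fun u => (w:ℤ)^2 ≤ u.1*a₁ + u.2*a₂) with hG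
  set B := Q.filter (fun u => |u.1*a₁ + u.2*a₂| < (w:ℤ)^2) with hB
  have hIcc : (Finset.Icc (-(w:ℤ)) w).card = 2*w+1 := by
    rw [Int.card_Icc]; omega
  have hQcard : Q.card = (2*w+1)^2 := by
    rw [hQ, Finset.card_product, hIcc]; ring
  have hBcard : B.card ≤ (2*w+1) * 2 := by
    rcases le_max_iff.mp hA with h1 | h2
    · -- a₁ big, fiber over second coordinate
      have := Finset.card_eq_sum_card_fiberwise
        (f := fun u : ℤ × ℤ => u.2) (s := B) (t := Finset.Icc (-(w:ℤ)) w)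
        (fun u hu => by
          rw [Finset.mem_coe, hB, Finset.mem_filter, hQ, Finset.mem_product] at hu
          exact hu.1.2)
      rw [this]
      calc ∑ j ∈ Finset.Icc (-(w:ℤ)) w, (B.filter (fun u => u.2 = j)).card
          ≤ ∑ j ∈ Finset.Icc (-(w:ℤ)) w, 2 := by
            apply Finset.sum_le_sum
            intro j hj
            calc (B.filter (fun u => u.2 = j)).card
                ≤ ((Finset.Icc (-(w:ℤ)) w).filter (fun i => |i*a₁ + j*a₂| < (w:ℤ)^2)).card := by
                  apply Finset.card_le_card_of_injOn (fun u => u.1)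
                  · intro u hu
                    rw [Finset.mem_coe, Finset.mem_filter] at hu ⊢
                    obtain ⟨hu1, hu2⟩ := hu
                    rw [hB, Finset.mem_filter, hQ, Finset.mem_product] at hu1
                    refine ⟨hu1.1.1, ?_⟩
                    rw [← hu2]; exact hu1.2
                  · intro u hu v hv huv
                    simp only [Finset.coe_filter, Set.mem_setOf_eq] at hu hv
                    exact Prod.ext huv (hu.2.trans hv.2.symm)
                _ ≤ 2 := fiber_le w a₁ (j*a₂) h1 hw
          _ = (2*w+1) * 2 := by rw [Finset.sum_const, hIcc]; ring
    · -- a₂ big, fiber over first coordinate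
      have := Finset.card_eq_sum_card_fiberwise
        (f := fun u : ℤ × ℤ => u.1) (s := B) (t := Finset.Icc (-(w:ℤ)) w)
        (fun u hu => by
          rw [Finset.mem_coe, hB, Finset.mem_filter, hQ, Finset.mem_product] at hu
          exact hu.1.1)
      rw [this]
      calc ∑ i ∈ Finset.Icc (-(w:ℤ)) w, (B.filter (fun u => u.1 = i)).card
          ≤ ∑ i ∈ Finset.Icc (-(w:ℤ)) w, 2 := by
            apply Finset.sum_le_sum
            intro i hi
            calc (B.filter (fun u => u.1 = i)).card
                ≤ ((Finset.Icc (-(w:ℤ)) w).filter (fun j => |j*a₂ + i*a₁| < (w:ℤ)^2)).card := by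
                  apply Finset.card_le_card_of_injOn (fun u => u.2)
                  · intro u hu
                    rw [Finset.mem_coe, Finset.mem_filter] at hu ⊢
                    obtain ⟨hu1, hu2⟩ := hu
                    rw [hB, Finset.mem_filter, hQ, Finset.mem_product] at hu1
                    refine ⟨hu1.1.2, ?_⟩
                    rw [← hu2]
                    have := hu1.2
                    rwa [add_comm] at this
                  · intro u hu v hv huv
                    simp only [Finset.coe_filter, Set.mem_setOf_eq] at hu hv
                    exact Prod.ext (hu.2.trans hv.2.symm) huv
                _ ≤ 2 := fiber_le w a₂ (i*a₁) h2 hw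
          _ = (2*w+1) * 2 := by rw [Finset.sum_const, hIcc]; ring
  have hsub : Q ⊆ B ∪ G ∪ G.image (fun u => -u) := by
    intro u hu
    rw [Finset.mem_union, Finset.mem_union]
    by_cases hb : |u.1*a₁ + u.2*a₂| < (w:ℤ)^2
    · left; left; rw [hB, Finset.mem_filter]; exact ⟨hu, hb⟩
    · push_neg at hb
      rcases le_abs.mp hb with hp | hn
      · left; right; rw [hG, Finset.mem_filter]; exact ⟨hu, hp⟩
      · right
        rw [Finset.mem_image]
        refine ⟨-u, ?_, by simp⟩
        rw [hG, Finset.mem_filter]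
        constructor
        · rw [hQ, Finset.mem_product] at hu ⊢
          simp only [Prod.fst_neg, Prod.snd_neg, Finset.mem_Icc] at hu ⊢
          omega
        · simp only [Prod.fst_neg, Prod.snd_neg]
          nlinarith [hn]
  have hle : Q.card ≤ B.card + G.card + G.card := by
    calc Q.card ≤ (B ∪ G ∪ G.image (fun u => -u)).card := Finset.card_le_card hsub
      _ ≤ (B ∪ G).card + (G.image (fun u => -u)).card := Finset.card_union_le _ _
      _ ≤ B.card + G.card + (G.image (fun u => -u)).card := by
          have := Finset.card_union_le B G; omega
      _ ≤ B.card + G.card + G.card := by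
          have := Finset.card_image_le (f := fun u : ℤ × ℤ => -u) (s := G); omega
  rw [hQcard] at hle
  omega



set_option maxHeartbeats 1600000 in
/-- For every 0 < ε < 1 there is w₀ such that for every w ≥ w₀, every real R ≥ w³,
    every torus side n ≥ 10R, every node x, and every configuration σ with spin +1 on
    every node at toroidal Euclidean distance ≤ R from x: no node at Euclidean distance
    ≤ R from x is unhappy in σ; consequently, negating the spin of any single unhappy
    node yields a configuration in which all nodes at Euclidean distance ≤ R from x
    still have spin +1. -/
theorem stmt6 (ε : ℝ) (hε : 0 < ε) (hε1 : ε < 1) :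
    ∃ w₀ : ℕ, ∀ w : ℕ, w₀ ≤ w → ∀ R : ℝ, (w : ℝ)^3 ≤ R →
    ∀ (n : ℕ) [NeZero n], 10 * R ≤ (n : ℝ) →
    ∀ x : ZMod n × ZMod n, ∀ σ : ZMod n × ZMod n → ℤ,
    (∀ y, σ y = 1 ∨ σ y = -1) →
    (∀ y, torusEDist n x y ≤ R → σ y = 1) →
    (∀ y, torusEDist n x y ≤ R → ¬ Unhappy n w ε σ y) ∧
    (∀ v, Unhappy n w ε σ v →
      ∀ y, torusEDist n x y ≤ R → Function.update σ v (-(σ v)) y = 1) := by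
  refine ⟨max 3 ⌈ε⁻¹⌉₊, ?_⟩
  intro w hw R hwR n _inst hn x σ hspin hplus
  -- numeric facts
  have hw3 : 3 ≤ w := le_trans (le_max_left _ _) hw
  have hw3R : (3:ℝ) ≤ (w:ℝ) := by exact_mod_cast hw3
  have hwε : ε⁻¹ ≤ (w:ℝ) := by
    refine (Nat.le_ceil ε⁻¹).trans ?_
    exact_mod_cast le_trans (le_max_right _ _) hw
  have hεw : 2 ≤ ε * (2*(w:ℝ) + 1) := by
    have h1 : 1 ≤ ε * (w:ℝ) := by
      have := mul_le_mul_of_nonneg_left hwε hε.le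
      rwa [mul_inv_cancel₀ hε.ne'] at this
    nlinarith
  have hR27 : (27:ℝ) ≤ R := by
    have h33 : (3:ℝ)^3 ≤ (w:ℝ)^3 := pow_le_pow_left₀ (by norm_num) hw3R 3
    nlinarith [h33]
  have hR0 : (0:ℝ) < R := by linarith
  have hwleR : (w:ℝ)^2 ≤ R := by nlinarith
  have hwleR1 : (w:ℝ) ≤ R := by nlinarith
  have hsmall : ∀ m : ℤ, |(m:ℝ)| ≤ R + (w:ℝ) → 2 * m.natAbs ≤ n := by
    intro m hm
    have h2 : ((2 * m.natAbs : ℕ):ℝ) ≤ (n:ℝ) := by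
      push_cast [Nat.cast_natAbs]
      linarith
    exact_mod_cast h2
  have key : ∀ y, torusEDist n x y ≤ R → ¬ Unhappy n w ε σ y := by
    intro y hy hun
    have hσy : σ y = 1 := hplus y hy
    rw [Unhappy, hσy, one_mul] at hun
    -- lifts of the displacement from y to x
    set a₁ : ℤ := zlift n (x.1 - y.1) with ha₁
    set a₂ : ℤ := zlift n (x.2 - y.2) with ha₂
    have ha₁c : ((a₁ : ℤ) : ZMod n) = x.1 - y.1 := zlift_cast _
    have ha₂c : ((a₂ : ℤ) : ZMod n) = x.2 - y.2 := zlift_cast _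
    have ht₁ : a₁.natAbs = tdist n x.1 y.1 := by
      rw [ha₁, zlift_natAbs_tdist, tdist_comm]
    have ht₂ : a₂.natAbs = tdist n x.2 y.2 := by
      rw [ha₂, zlift_natAbs_tdist, tdist_comm]
    have hsum : ((a₁:ℝ))^2 + ((a₂:ℝ))^2 ≤ R^2 := by
      have h0 : (0:ℝ) ≤ ((tdist n x.1 y.1 : ℝ))^2 + ((tdist n x.2 y.2 : ℝ))^2 := by positivity
      have h1 : ((tdist n x.1 y.1 : ℝ))^2 + ((tdist n x.2 y.2 : ℝ))^2 ≤ R^2 := by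
        rw [torusEDist] at hy
        nlinarith [Real.sq_sqrt h0, Real.sqrt_nonneg (((tdist n x.1 y.1 : ℝ))^2 + ((tdist n x.2 y.2 : ℝ))^2)]
      rw [← ht₁, ← ht₂] at h1
      have e1 : ((a₁.natAbs : ℕ):ℝ)^2 = ((a₁:ℝ))^2 := by
        rw [natAbs_cast_abs, sq_abs]
      have e2 : ((a₂.natAbs : ℕ):ℝ)^2 = ((a₂:ℝ))^2 := by
        rw [natAbs_cast_abs, sq_abs]
      rw [e1, e2] at h1
      exact h1
    have haR1 : |(a₁:ℝ)| ≤ R := by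
      nlinarith [sq_abs ((a₁:ℝ)), abs_nonneg ((a₁:ℝ)), sq_nonneg ((a₂:ℝ))]
    have haR2 : |(a₂:ℝ)| ≤ R := by
      nlinarith [sq_abs ((a₂:ℝ)), abs_nonneg ((a₂:ℝ)), sq_nonneg ((a₁:ℝ))]
    -- Euclidean distance formula via lifts
    have hedist : ∀ (z : ZMod n × ZMod n) (m₁ m₂ : ℤ),
        ((m₁:ZMod n) = z.1 - x.1) → ((m₂:ZMod n) = z.2 - x.2) →
        |(m₁:ℝ)| ≤ R + (w:ℝ) → |(m₂:ℝ)| ≤ R + (w:ℝ) →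
        torusEDist n x z = Real.sqrt ((m₁:ℝ)^2 + (m₂:ℝ)^2) := by
      intro z m₁ m₂ h1 h2 hb1 hb2
      rw [torusEDist, tdist_eq_natAbs m₁ x.1 z.1 h1 (hsmall _ hb1),
        tdist_eq_natAbs m₂ x.2 z.2 h2 (hsmall _ hb2)]
      congr 2
      · rw [natAbs_cast_abs, sq_abs]
      · rw [natAbs_cast_abs, sq_abs]
    -- members of the neighbourhood, lifted
    have hnbhd_lift : ∀ z ∈ nbhd n w y,
        ∃ u₁ u₂ : ℤ, ((u₁:ZMod n) = z.1 - y.1) ∧ ((u₂:ZMod n) = z.2 - y.2) ∧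
          u₁.natAbs ≤ w ∧ u₂.natAbs ≤ w := by
      intro z hz
      rw [nbhd, Finset.mem_filter] at hz
      have h1 : tdist n y.1 z.1 ≤ w := le_trans (le_max_left _ _) hz.2
      have h2 : tdist n y.2 z.2 ≤ w := le_trans (le_max_right _ _) hz.2
      exact ⟨zlift n (z.1 - y.1), zlift n (z.2 - y.2), zlift_cast _, zlift_cast _,
        by rw [zlift_natAbs_tdist]; exact h1, by rw [zlift_natAbs_tdist]; exact h2⟩
    -- the set of +1 neighbours
    set S := (nbhd n w y).filter (fun z => torusEDist n x z ≤ R) with hS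
    have hbias : 2 * (S.card : ℤ) - ((nbhd n w y).card : ℤ) ≤ bias n w σ y := by
      have hsplit := Finset.sum_filter_add_sum_filter_not (nbhd n w y)
        (fun z => torusEDist n x z ≤ R) σ
      have hS1 : ∑ z ∈ S, σ z = (S.card : ℤ) := by
        calc ∑ z ∈ S, σ z = ∑ _z ∈ S, (1:ℤ) := by
              refine Finset.sum_congr rfl (fun z hz => ?_)
              rw [hS, Finset.mem_filter] at hz
              exact hplus z hz.2
          _ = (S.card : ℤ) := by simp
      have hS2 : -(((nbhd n w y).filter (fun z => ¬ torusEDist n x z ≤ R)).card : ℤ) ≤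
          ∑ z ∈ (nbhd n w y).filter (fun z => ¬ torusEDist n x z ≤ R), σ z := by
        have := Finset.card_nsmul_le_sum
          ((nbhd n w y).filter (fun z => ¬ torusEDist n x z ≤ R)) σ (-1)
          (fun z _ => by rcases hspin z with h | h <;> omega)
        simpa using this
      have hcards := Finset.card_filter_add_card_filter_not
        (s := nbhd n w y) (p := fun z => torusEDist n x z ≤ R)
      rw [bias, ← hsplit, ← hS]
      rw [← hS] at hcards
      have : ((nbhd n w y).filter (fun z => ¬ torusEDist n x z ≤ R)).card
          = (nbhd n w y).card - S.card := by omega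
      rw [this] at hS2
      have hle : S.card ≤ (nbhd n w y).card := by omega
      push_cast [Nat.cast_sub hle] at hS2 ⊢
      linarith [hS1, hS2]
    have hnb : (nbhd n w y).card ≤ (2*w+1)^2 := by
      have hIcc : (Finset.Icc (-(w:ℤ)) w).card = 2*w+1 := by
        rw [Int.card_Icc]; omega
      have : (nbhd n w y).card ≤ (Finset.Icc (-(w:ℤ)) w ×ˢ Finset.Icc (-(w:ℤ)) w).card := by
        apply Finset.card_le_card_of_injOn
          (fun z => (zlift n (z.1 - y.1), zlift n (z.2 - y.2)))
        · intro z hz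
          obtain ⟨u₁, u₂, hc1, hc2, hn1, hn2⟩ := hnbhd_lift z hz
          rw [nbhd, Finset.mem_coe, Finset.mem_filter] at hz
          have h1 : tdist n y.1 z.1 ≤ w := le_trans (le_max_left _ _) hz.2
          have h2 : tdist n y.2 z.2 ≤ w := le_trans (le_max_right _ _) hz.2
          rw [Finset.mem_coe, Finset.mem_product, Finset.mem_Icc, Finset.mem_Icc]
          have e1 : (zlift n (z.1 - y.1)).natAbs ≤ w := by rw [zlift_natAbs_tdist]; exact h1
          have e2 : (zlift n (z.2 - y.2)).natAbs ≤ w := by rw [zlift_natAbs_tdist]; exact h2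
          dsimp only
          constructor <;> constructor <;> omega
        · intro z hz z' hz' hzz
          have hz1 : z.1 = y.1 + ((zlift n (z.1 - y.1) : ℤ) : ZMod n) := by
            rw [zlift_cast]; ring
          have hz2 : z.2 = y.2 + ((zlift n (z.2 - y.2) : ℤ) : ZMod n) := by
            rw [zlift_cast]; ring
          have hz1' : z'.1 = y.1 + ((zlift n (z'.1 - y.1) : ℤ) : ZMod n) := by
            rw [zlift_cast]; ring
          have hz2' : z'.2 = y.2 + ((zlift n (z'.2 - y.2) : ℤ) : ZMod n) := by
            rw [zlift_cast]; ring
          have e1 := congrArg Prod.fst hzz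
          have e2 := congrArg Prod.snd hzz
          simp only at e1 e2
          apply Prod.ext
          · rw [hz1, hz1', e1]
          · rw [hz2, hz2', e2]
      rw [Finset.card_product, hIcc] at this
      calc (nbhd n w y).card ≤ (2*w+1) * (2*w+1) := this
        _ = (2*w+1)^2 := by ring
    by_cases hcase : max a₁.natAbs a₂.natAbs < w^2
    · -- everything near y is inside the ball: all spins +1
      have hall : ∀ z ∈ nbhd n w y, σ z = 1 := by
        intro z hz
        obtain ⟨u₁, u₂, hc1, hc2, hn1, hn2⟩ := hnbhd_lift z hz
        apply hplus
        have hm1 : ((u₁ - a₁ : ℤ) : ZMod n) = z.1 - x.1 := by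
          push_cast [ha₁c, hc1]; ring
        have hm2 : ((u₂ - a₂ : ℤ) : ZMod n) = z.2 - x.2 := by
          push_cast [ha₂c, hc2]; ring
        have hb1 : |((u₁ - a₁ : ℤ):ℝ)| ≤ (w:ℝ) + (w:ℝ)^2 := by
          have l1 : |(u₁:ℝ)| ≤ (w:ℝ) := by
            rw [← natAbs_cast_abs]; exact_mod_cast hn1
          have l2 : |(a₁:ℝ)| ≤ (w:ℝ)^2 := by
            rw [← natAbs_cast_abs]
            have : a₁.natAbs ≤ w^2 := by omega
            exact_mod_cast this
          push_cast
          calc |(u₁:ℝ) - (a₁:ℝ)| ≤ |(u₁:ℝ)| + |(a₁:ℝ)| := abs_sub _ _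
            _ ≤ (w:ℝ) + (w:ℝ)^2 := by linarith
        have hb2 : |((u₂ - a₂ : ℤ):ℝ)| ≤ (w:ℝ) + (w:ℝ)^2 := by
          have l1 : |(u₂:ℝ)| ≤ (w:ℝ) := by
            rw [← natAbs_cast_abs]; exact_mod_cast hn2
          have l2 : |(a₂:ℝ)| ≤ (w:ℝ)^2 := by
            rw [← natAbs_cast_abs]
            have : a₂.natAbs ≤ w^2 := by omega
            exact_mod_cast this
          push_cast
          calc |(u₂:ℝ) - (a₂:ℝ)| ≤ |(u₂:ℝ)| + |(a₂:ℝ)| := abs_sub _ _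
            _ ≤ (w:ℝ) + (w:ℝ)^2 := by linarith
        have hwb : (w:ℝ) + (w:ℝ)^2 ≤ R + (w:ℝ) := by nlinarith
        rw [hedist z (u₁ - a₁) (u₂ - a₂) hm1 hm2 (le_trans hb1 hwb) (le_trans hb2 hwb)]
        have hsq : ((u₁ - a₁ : ℤ):ℝ)^2 + ((u₂ - a₂ : ℤ):ℝ)^2 ≤ R^2 := by
          have q1 : ((u₁ - a₁ : ℤ):ℝ)^2 ≤ ((w:ℝ) + (w:ℝ)^2)^2 := by
            nlinarith [abs_nonneg ((u₁ - a₁ : ℤ):ℝ), sq_abs ((u₁ - a₁ : ℤ):ℝ)]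
          have q2 : ((u₂ - a₂ : ℤ):ℝ)^2 ≤ ((w:ℝ) + (w:ℝ)^2)^2 := by
            nlinarith [abs_nonneg ((u₂ - a₂ : ℤ):ℝ), sq_abs ((u₂ - a₂ : ℤ):ℝ)]
          have hRw : 2 * ((w:ℝ) + (w:ℝ)^2)^2 ≤ R^2 := by
            have h6 : 2 * ((w:ℝ) + (w:ℝ)^2)^2 ≤ ((w:ℝ)^3)^2 := by
              have c1 : 9 * (w:ℝ)^4 ≤ (w:ℝ)^6 := by
                have := mul_le_mul_of_nonneg_left (by nlinarith : (9:ℝ) ≤ (w:ℝ)^2)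
                  (by positivity : (0:ℝ) ≤ (w:ℝ)^4)
                nlinarith [this]
              have c2 : 3 * (w:ℝ)^3 ≤ (w:ℝ)^4 := by
                have := mul_le_mul_of_nonneg_left hw3R (by positivity : (0:ℝ) ≤ (w:ℝ)^3)
                nlinarith [this]
              have c3 : 3 * (w:ℝ)^2 ≤ (w:ℝ)^3 := by
                have := mul_le_mul_of_nonneg_left hw3R (by positivity : (0:ℝ) ≤ (w:ℝ)^2)
                nlinarith [this]
              nlinarith [c1, c2, c3]
            have h7 : ((w:ℝ)^3)^2 ≤ R^2 := pow_le_pow_left₀ (by positivity) hwR 2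
            linarith
          linarith
        calc Real.sqrt (((u₁ - a₁ : ℤ):ℝ)^2 + ((u₂ - a₂ : ℤ):ℝ)^2)
            ≤ Real.sqrt (R^2) := Real.sqrt_le_sqrt hsq
          _ = R := Real.sqrt_sq hR0.le
      have hbias0 : (0:ℤ) ≤ bias n w σ y := by
        have : bias n w σ y = ∑ _z ∈ nbhd n w y, (1:ℤ) := by
          rw [bias]; exact Finset.sum_congr rfl hall
        rw [this]
        simp
      have : (0:ℝ) ≤ ((bias n w σ y : ℤ):ℝ) := by exact_mod_cast hbias0
      nlinarith [sq_nonneg (2*(w:ℝ)+1)]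
    · -- boundary case: count the +1 half-window
      push_neg at hcase
      have hA : ((w:ℤ))^2 ≤ max |a₁| |a₂| := by
        rw [Int.abs_eq_natAbs, Int.abs_eq_natAbs]
        have : (w^2 : ℕ) ≤ max a₁.natAbs a₂.natAbs := hcase
        exact_mod_cast this
      set G := (Finset.Icc (-(w:ℤ)) w ×ˢ Finset.Icc (-(w:ℤ)) w).filter
        (fun u => (w:ℤ)^2 ≤ u.1*a₁ + u.2*a₂) with hG
      have hcount := count_lb w (by omega) a₁ a₂ hA
      rw [← hG] at hcount
      have hGS : G.card ≤ S.card := by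
        apply Finset.card_le_card_of_injOn
          (fun u => (y.1 + ((u.1 : ℤ):ZMod n), y.2 + ((u.2 : ℤ):ZMod n)))
        · intro u hu
          rw [Finset.mem_coe, hG, Finset.mem_filter, Finset.mem_product, Finset.mem_Icc, Finset.mem_Icc] at hu
          obtain ⟨⟨⟨hu11, hu12⟩, hu21, hu22⟩, hdot⟩ := hu
          have hn1 : u.1.natAbs ≤ w := by omega
          have hn2 : u.2.natAbs ≤ w := by omega
          have hu1R : |(u.1:ℝ)| ≤ (w:ℝ) := by
            rw [← natAbs_cast_abs]; exact_mod_cast hn1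
          have hu2R : |(u.2:ℝ)| ≤ (w:ℝ) := by
            rw [← natAbs_cast_abs]; exact_mod_cast hn2
          rw [Finset.mem_coe, hS, Finset.mem_filter]
          constructor
          · -- in the neighbourhood of y
            rw [nbhd, Finset.mem_filter]
            refine ⟨Finset.mem_univ _, ?_⟩
            have hc1 : ((u.1 : ℤ) : ZMod n) = (y.1 + ((u.1 : ℤ):ZMod n)) - y.1 := by ring
            have hc2 : ((u.2 : ℤ) : ZMod n) = (y.2 + ((u.2 : ℤ):ZMod n)) - y.2 := by ring
            have hd1 := tdist_eq_natAbs u.1 y.1 _ hc1 (hsmall _ (by push_cast; linarith [hu1R]))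
            have hd2 := tdist_eq_natAbs u.2 y.2 _ hc2 (hsmall _ (by push_cast; linarith [hu2R]))
            rw [torusDist]
            simp only [hd1, hd2]
            omega
          · -- within Euclidean distance R of x
            have hm1 : ((u.1 - a₁ : ℤ) : ZMod n) = (y.1 + ((u.1 : ℤ):ZMod n)) - x.1 := by
              push_cast [ha₁c]; ring
            have hm2 : ((u.2 - a₂ : ℤ) : ZMod n) = (y.2 + ((u.2 : ℤ):ZMod n)) - x.2 := by
              push_cast [ha₂c]; ring
            have hb1 : |((u.1 - a₁ : ℤ):ℝ)| ≤ R + (w:ℝ) := by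
              push_cast
              calc |(u.1:ℝ) - (a₁:ℝ)| ≤ |(u.1:ℝ)| + |(a₁:ℝ)| := abs_sub _ _
                _ ≤ R + (w:ℝ) := by linarith
            have hb2 : |((u.2 - a₂ : ℤ):ℝ)| ≤ R + (w:ℝ) := by
              push_cast
              calc |(u.2:ℝ) - (a₂:ℝ)| ≤ |(u.2:ℝ)| + |(a₂:ℝ)| := abs_sub _ _
                _ ≤ R + (w:ℝ) := by linarith
            rw [hedist _ (u.1 - a₁) (u.2 - a₂) hm1 hm2 hb1 hb2]
            have hdotR : (w:ℝ)^2 ≤ (u.1:ℝ)*(a₁:ℝ) + (u.2:ℝ)*(a₂:ℝ) := by exact_mod_cast hdot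
            have hsq : ((u.1 - a₁ : ℤ):ℝ)^2 + ((u.2 - a₂ : ℤ):ℝ)^2 ≤ R^2 := by
              push_cast
              have e1 : ((u.1:ℝ))^2 ≤ (w:ℝ)^2 := by
                nlinarith [abs_nonneg ((u.1:ℝ)), sq_abs ((u.1:ℝ))]
              have e2 : ((u.2:ℝ))^2 ≤ (w:ℝ)^2 := by
                nlinarith [abs_nonneg ((u.2:ℝ)), sq_abs ((u.2:ℝ))]
              nlinarith [hsum, hdotR]
            calc Real.sqrt (((u.1 - a₁ : ℤ):ℝ)^2 + ((u.2 - a₂ : ℤ):ℝ)^2)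
                ≤ Real.sqrt (R^2) := Real.sqrt_le_sqrt hsq
              _ = R := Real.sqrt_sq hR0.le
        · -- injectivity
          intro u hu v hv huv
          rw [hG] at hu hv
          simp only [Finset.coe_filter, Set.mem_setOf_eq, Finset.mem_coe,
            Finset.mem_product, Finset.mem_Icc] at hu hv
          have e1 := congrArg Prod.fst huv
          have e2 := congrArg Prod.snd huv
          simp only [add_right_inj] at e1 e2
          have hnw : 2*w < n := by
            have : ((2*w:ℕ):ℝ) < (n:ℝ) := by push_cast; nlinarith
            exact_mod_cast this
          have hinj : ∀ p q : ℤ, -(w:ℤ) ≤ p → p ≤ w → -(w:ℤ) ≤ q → q ≤ w →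
              ((p:ℤ):ZMod n) = ((q:ℤ):ZMod n) → p = q := by
            intro p q hp1 hp2 hq1 hq2 hpq
            have : ((p - q : ℤ) : ZMod n) = 0 := by push_cast [hpq]; ring
            have hdvd : (n:ℤ) ∣ (p - q) := (ZMod.intCast_zmod_eq_zero_iff_dvd _ _).mp this
            have habs : (p - q).natAbs < n := by
              have : (p-q).natAbs ≤ 2*w := by omega
              omega
            have h0 : p - q = 0 := by
              refine Int.eq_zero_of_dvd_of_natAbs_lt_natAbs hdvd ?_
              simpa using habs
            omega
          apply Prod.ext
          · exact hinj u.1 v.1 hu.1.1.1 hu.1.1.2 hv.1.1.1 hv.1.1.2 e1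
          · exact hinj u.2 v.2 hu.1.2.1 hu.1.2.2 hv.1.2.1 hv.1.2.2 e2
      -- conclude
      have hfinal : -(4*(w:ℤ) + 2) ≤ bias n w σ y := by
        have h1 : ((2*w+1)^2 : ℕ) ≤ 2 * S.card + (4*w+2) := le_trans hcount (by omega)
        have h2 : 2 * (S.card : ℤ) - ((nbhd n w y).card : ℤ) ≥
            2 * (S.card : ℤ) - ((2*w+1)^2 : ℕ) := by
          have : ((nbhd n w y).card : ℤ) ≤ (((2*w+1)^2 : ℕ) : ℤ) := by exact_mod_cast hnb
          omega
        have h1' : (((2*w+1)^2 : ℕ) : ℤ) ≤ 2 * (S.card : ℤ) + (4*(w:ℤ)+2) := by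
          exact_mod_cast h1
        omega
      have hfR : -(4*(w:ℝ) + 2) ≤ ((bias n w σ y : ℤ):ℝ) := by exact_mod_cast hfinal
      have : ε * (2*(w:ℝ)+1)^2 ≥ 4*(w:ℝ) + 2 := by nlinarith
      linarith
  refine ⟨key, ?_⟩
  intro v hv y hy
  have hvy : y ≠ v := by
    intro h
    exact key y hy (h ▸ hv)
  rw [Function.update_of_ne hvy]
  exact hplus y hy
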